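/- Fix d ∈ ℕ, d ≥ 2, and let S be the set of real symmetric d×d matrices (a topological subspace of ℝ^{d×d} with the Euclidean topology). Consider the multivalued map Diag with domain S defined by Diag(A) = the set of d-tuples (w_1,…,w_d) ∈ (ℝ^d)^d that form a basis of ℝ^d and such that each w_j is an eigenvector of A (i.e. w_j ≠ 0 and A·w_j = λ_j w_j for some λ_j ∈ ℝ); by the spectral theorem Diag(A) ≠ ∅ for every A ∈ S. Then Diag is not (d−1)-continuous as a multivalued map: for every family of sets D_1, …, D_{d−1} with S = D_1 ∪ … ∪ D_{d−1}, there exist an index i and a matrix A ∈ D_i such that Diag is not continuous at A relative to D_i. -/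

import Mathlib

/-- A multivalued map `F` is continuous at `x` relative to `D` if there is some
`y ∈ F x` such that every open neighbourhood `V` of `y` admits an open neighbourhood
`U` of `x` with `F z ∩ V ≠ ∅` for all `z ∈ U ∩ D`. -/
def MVContinuousAt {X Y : Type*} [TopologicalSpace X] [TopologicalSpace Y]
    (F : X → Set Y) (D : Set X) (x : X) : Prop :=
  ∃ y ∈ F x, ∀ V : Set Y, IsOpen V → y ∈ V →
    ∃ U : Set X, IsOpen U ∧ x ∈ U ∧ ∀ z ∈ U ∩ D, (F z ∩ V).Nonempty

open Matrix

section helpers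

variable {d m : ℕ}

lemma my_sum_mulVec {k : Type*} (s : Finset k)
    (M : k → Matrix (Fin d) (Fin d) ℝ) (x : Fin d → ℝ) :
    (∑ l ∈ s, M l).mulVec x = ∑ l ∈ s, (M l).mulVec x := by
  funext i
  simp only [Matrix.mulVec, dotProduct, Matrix.sum_apply, Finset.sum_apply,
    Finset.sum_mul]
  rw [Finset.sum_comm]

lemma my_vecMulVec_mulVec (a b x : Fin d → ℝ) :
    (Matrix.vecMulVec a b).mulVec x = (b ⬝ᵥ x) • a := by
  funext i
  simp only [Matrix.mulVec, dotProduct, Matrix.vecMulVec_apply, Pi.smul_apply,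
    smul_eq_mul, Finset.sum_mul]
  exact Finset.sum_congr rfl fun j _ => by ring

lemma my_dotProduct_sum {k : Type*} (s : Finset k) (u : Fin d → ℝ) (f : k → (Fin d → ℝ)) :
    u ⬝ᵥ (∑ l ∈ s, f l) = ∑ l ∈ s, u ⬝ᵥ f l := by
  simp only [dotProduct, Finset.sum_apply, Finset.mul_sum]
  rw [Finset.sum_comm]

lemma my_A_mulVec (v : Fin m → (Fin d → ℝ)) (τ : Fin m → ℝ) (x : Fin d → ℝ) :
    (∑ l, τ l • Matrix.vecMulVec (v l) (v l)).mulVec x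
      = ∑ l, (τ l * (v l ⬝ᵥ x)) • v l := by
  rw [my_sum_mulVec]
  refine Finset.sum_congr rfl fun l _ => ?_
  rw [Matrix.smul_mulVec, my_vecMulVec_mulVec, smul_smul]

lemma my_A_symm (v : Fin m → (Fin d → ℝ)) (τ : Fin m → ℝ) :
    (∑ l, τ l • Matrix.vecMulVec (v l) (v l)).IsSymm := by
  unfold Matrix.IsSymm
  ext i j
  simp only [Matrix.transpose_apply, Matrix.sum_apply,
    Matrix.smul_apply, Matrix.vecMulVec_apply, smul_eq_mul]
  exact Finset.sum_congr rfl fun l _ => by ring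

end helpers

section eig

variable {d m : ℕ}

/-- Any basis of eigenvectors of `∑ τ l • v l (v l)ᵀ` (with `v` orthonormal, `τ`
positive injective) contains a nonzero multiple of each `v l₀`. -/
lemma my_eig (v : Fin m → (Fin d → ℝ))
    (hv : ∀ l l', v l ⬝ᵥ v l' = if l = l' then 1 else 0)
    (τ : Fin m → ℝ) (hτpos : ∀ l, 0 < τ l) (hτinj : Function.Injective τ)
    (w : Fin d → (Fin d → ℝ))
    (hspan : Submodule.span ℝ (Set.range w) = ⊤)
    (heig : ∀ j, ∃ lam : ℝ,
      (∑ l, τ l • Matrix.vecMulVec (v l) (v l)).mulVec (w j) = lam • w j)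
    (l₀ : Fin m) : ∃ (j : Fin d) (c : ℝ), c ≠ 0 ∧ w j = c • v l₀ := by
  set A : Matrix (Fin d) (Fin d) ℝ := ∑ l, τ l • Matrix.vecMulVec (v l) (v l) with hA
  have hdot : ∀ (l' : Fin m) (x : Fin d → ℝ),
      v l' ⬝ᵥ A.mulVec x = τ l' * (v l' ⬝ᵥ x) := by
    intro l' x
    rw [hA, my_A_mulVec, my_dotProduct_sum]
    have : ∀ l : Fin m, v l' ⬝ᵥ (τ l * (v l ⬝ᵥ x)) • v l
        = if l' = l then τ l * (v l ⬝ᵥ x) else 0 := by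
      intro l
      rw [dotProduct_smul, hv l' l]
      by_cases h : l' = l <;> simp [h]
    rw [Finset.sum_congr rfl fun l _ => this l, Finset.sum_ite_eq]
    simp
  -- some w j has nonzero component along v l₀
  have hstep1 : ∃ j, v l₀ ⬝ᵥ w j ≠ 0 := by
    by_contra hall
    push_neg at hall
    let φ : (Fin d → ℝ) →ₗ[ℝ] ℝ :=
      { toFun := fun x => v l₀ ⬝ᵥ x
        map_add' := fun a b => dotProduct_add _ _ _
        map_smul' := fun c a => by simp [dotProduct_smul] }
    have hsub : Set.range w ⊆ (LinearMap.ker φ : Set (Fin d → ℝ)) := by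
      rintro _ ⟨j, rfl⟩
      exact hall j
    have hle : Submodule.span ℝ (Set.range w) ≤ LinearMap.ker φ :=
      Submodule.span_le.mpr hsub
    rw [hspan, top_le_iff] at hle
    have h1 : φ (v l₀) = 0 := by
      rw [← LinearMap.mem_ker, hle]; trivial
    have h2 : φ (v l₀) = 1 := by
      show v l₀ ⬝ᵥ v l₀ = 1
      rw [hv l₀ l₀, if_pos rfl]
    rw [h1] at h2
    exact one_ne_zero h2.symm
  obtain ⟨j, hcne⟩ := hstep1
  obtain ⟨lam, hlam⟩ := heig j
  set c : ℝ := v l₀ ⬝ᵥ w j with hc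
  -- the eigenvalue is τ l₀
  have hlameq : lam = τ l₀ := by
    have h1 : v l₀ ⬝ᵥ A.mulVec (w j) = τ l₀ * c := hdot l₀ (w j)
    have h2 : v l₀ ⬝ᵥ A.mulVec (w j) = lam * c := by
      rw [hlam, dotProduct_smul]; rfl
    rw [h1] at h2
    exact mul_right_cancel₀ hcne h2.symm
  -- all other components vanish
  have hother : ∀ l', l' ≠ l₀ → v l' ⬝ᵥ w j = 0 := by
    intro l' hne
    have h1 : v l' ⬝ᵥ A.mulVec (w j) = τ l' * (v l' ⬝ᵥ w j) := hdot l' (w j)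
    have h2 : v l' ⬝ᵥ A.mulVec (w j) = τ l₀ * (v l' ⬝ᵥ w j) := by
      rw [hlam, dotProduct_smul, hlameq]; rfl
    rw [h1] at h2
    by_contra h3
    exact hne (hτinj (mul_right_cancel₀ h3 h2))
  -- conclude
  have hsum : A.mulVec (w j) = (τ l₀ * c) • v l₀ := by
    rw [hA, my_A_mulVec]
    rw [Finset.sum_eq_single l₀]
    · intro l' _ hne
      rw [hother l' hne, mul_zero, zero_smul]
    · intro h; exact absurd (Finset.mem_univ l₀) h
  refine ⟨j, c, hcne, ?_⟩
  have : (τ l₀) • w j = (τ l₀) • (c • v l₀) := by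
    rw [smul_smul, ← hsum, hlam, hlameq]
  exact smul_right_injective _ (ne_of_gt (hτpos l₀)) this

end eig

section pick

variable {d m : ℕ}

/-- In the orthogonal complement of `m ≤ d - 2` vectors one can find a unit vector
(w.r.t. the dot product) spanning a line avoiding `d` given nonzero vectors. -/
lemma my_pick_vec (hm : m + 2 ≤ d) (v : Fin m → (Fin d → ℝ))
    (y : Fin d → (Fin d → ℝ)) (hy : ∀ j, y j ≠ 0) :
    ∃ u : Fin d → ℝ, u ⬝ᵥ u = 1 ∧ (∀ l, v l ⬝ᵥ u = 0) ∧
      ∀ j, y j ∉ Submodule.span ℝ {u} := by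
  classical
  -- the common kernel
  let φ : (Fin d → ℝ) → ((Fin d → ℝ) →ₗ[ℝ] ℝ) := fun a =>
    { toFun := fun x => a ⬝ᵥ x
      map_add' := fun s t => dotProduct_add _ _ _
      map_smul' := fun c s => by simp [dotProduct_smul] }
  let L : (Fin d → ℝ) →ₗ[ℝ] (Fin m → ℝ) := LinearMap.pi (fun l => φ (v l))
  have hrank : 2 ≤ Module.finrank ℝ (LinearMap.ker L) := by
    have h1 := LinearMap.finrank_range_add_finrank_ker L
    have h2 : Module.finrank ℝ (Fin d → ℝ) = d := by
      simp [Module.finrank_pi]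
    have h3 : Module.finrank ℝ (LinearMap.range L) ≤ m := by
      have := Submodule.finrank_le (LinearMap.range L)
      simpa [Module.finrank_pi] using this
    omega
  -- two independent vectors in the kernel
  let b := Module.finBasis ℝ (LinearMap.ker L)
  have h01 : (⟨0, by omega⟩ : Fin (Module.finrank ℝ (LinearMap.ker L)))
      ≠ ⟨1, by omega⟩ := by
    intro h
    exact zero_ne_one (congrArg Fin.val h)
  set E1 : LinearMap.ker L := b ⟨0, by omega⟩ with hE1
  set E2 : LinearMap.ker L := b ⟨1, by omega⟩ with hE2
  have hpair : ∀ a c : ℝ, a • (E1 : Fin d → ℝ) + c • (E2 : Fin d → ℝ) = 0 →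
      a = 0 ∧ c = 0 := by
    intro a c h
    have h' : a • E1 + c • E2 = 0 := by
      apply Subtype.ext
      simpa using h
    have ha := congrArg (fun z => b.repr z ⟨0, by omega⟩) h'
    have hc := congrArg (fun z => b.repr z ⟨1, by omega⟩) h'
    simp only [map_add, _root_.map_smul, hE1, hE2, Module.Basis.repr_self, map_zero] at ha hc
    rw [Finsupp.smul_single, Finsupp.smul_single] at ha hc
    simp only [Finsupp.add_apply, Finsupp.single_eq_same, smul_eq_mul, mul_one,
      Finsupp.single_eq_of_ne h01, Finsupp.single_eq_of_ne (Ne.symm h01),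
      Finsupp.coe_zero, Pi.zero_apply, add_zero, zero_add] at ha hc
    exact ⟨ha, hc⟩
  -- candidates e1 + t • e2 for t = 0, 1, ..., d
  let x : ℕ → (Fin d → ℝ) := fun t => (E1 : Fin d → ℝ) + (t : ℝ) • (E2 : Fin d → ℝ)
  have hxne : ∀ t, x t ≠ 0 := by
    intro t h
    have := (hpair 1 (t : ℝ) (by simpa [x] using h)).1
    exact one_ne_zero this
  have hxK : ∀ t l, v l ⬝ᵥ x t = 0 := by
    intro t l
    have h1 : v l ⬝ᵥ (E1 : Fin d → ℝ) = 0 := congrFun E1.2 l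
    have h2 : v l ⬝ᵥ (E2 : Fin d → ℝ) = 0 := congrFun E2.2 l
    simp [x, dotProduct_add, dotProduct_smul, h1, h2]
  -- pigeonhole: some candidate avoids all the lines ℝ (y j)
  have hgood : ∃ t ∈ Finset.range (d + 1), ∀ j, y j ∉ Submodule.span ℝ {x t} := by
    by_contra hcon
    push_neg at hcon
    have hcon' : ∀ t : ℕ, ∃ j : Fin d,
        t ∈ Finset.range (d + 1) → y j ∈ Submodule.span ℝ {x t} := by
      intro t
      by_cases h : t ∈ Finset.range (d + 1)
      · exact (hcon t h).imp fun j hj => fun _ => hj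
      · exact ⟨⟨0, by omega⟩, fun h' => absurd h' h⟩
    choose g hg using hcon'
    obtain ⟨t, ht, s, hs, hts, hgts⟩ :=
      Finset.exists_ne_map_eq_of_card_lt_of_maps_to
        (s := Finset.range (d + 1)) (t := (Finset.univ : Finset (Fin d)))
        (by simp) (fun a _ => Finset.mem_univ (g a))
    set j := g t with hj
    obtain ⟨a, ha⟩ := Submodule.mem_span_singleton.mp (hg t ht)
    obtain ⟨c, hc⟩ := Submodule.mem_span_singleton.mp (hgts ▸ hg s hs)
    have hane : a ≠ 0 := by
      rintro rfl
      rw [zero_smul] at ha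
      exact hy j ha.symm
    have hcne : c ≠ 0 := by
      rintro rfl
      rw [zero_smul] at hc
      exact hy j hc.symm
    -- a • x t = c • x s, expand and use independence
    have hxx : a • x t - c • x s = 0 := by rw [ha, hc, sub_self]
    have hexp : (a - c) • (E1 : Fin d → ℝ)
        + (a * (t : ℝ) - c * (s : ℝ)) • (E2 : Fin d → ℝ) = 0 := by
      rw [← hxx]
      simp only [x, smul_add, smul_smul, sub_smul]
      abel
    obtain ⟨h1, h2⟩ := hpair _ _ hexp
    have hac : a = c := by linarith [sub_eq_zero.mp h1]
    have hts' : (t : ℝ) = (s : ℝ) := by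
      rw [hac] at h2
      have := sub_eq_zero.mp h2
      exact mul_left_cancel₀ hcne this
    exact hts (Nat.cast_injective hts')
  obtain ⟨t, _, hxt⟩ := hgood
  -- normalize
  set X := x t with hX
  have hXne : X ≠ 0 := hxne t
  have hXpos : 0 < X ⬝ᵥ X := by
    have hnn : 0 ≤ X ⬝ᵥ X := Finset.sum_nonneg fun i _ => mul_self_nonneg (X i)
    rcases lt_or_eq_of_le hnn with h | h
    · exact h
    · exact absurd (dotProduct_self_eq_zero.mp h.symm) hXne
  set r : ℝ := (Real.sqrt (X ⬝ᵥ X))⁻¹ with hr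
  have hrpos : 0 < r := by
    rw [hr]
    exact inv_pos.mpr (Real.sqrt_pos.mpr hXpos)
  refine ⟨r • X, ?_, ?_, ?_⟩
  · rw [smul_dotProduct, dotProduct_smul, smul_eq_mul, smul_eq_mul, hr]
    rw [← mul_assoc, ← mul_inv]
    rw [Real.mul_self_sqrt (le_of_lt hXpos)]
    exact inv_mul_cancel₀ (ne_of_gt hXpos)
  · intro l
    rw [dotProduct_smul, hxK t l, smul_zero]
  · intro j hj
    apply hxt j
    obtain ⟨a, ha⟩ := Submodule.mem_span_singleton.mp hj
    exact Submodule.mem_span_singleton.mpr ⟨a * r, by rw [← ha, mul_smul]⟩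

end pick

/-- The multivalued diagonalization map `Diag`, assigning to a real symmetric `d × d`
matrix the set of bases of `ℝ^d` consisting of eigenvectors, is not `(d-1)`-continuous. -/
theorem diag_not_d_minus_one_continuous (d : ℕ) (hd : 2 ≤ d) :
    ∀ D : Fin (d - 1) → Set (Matrix (Fin d) (Fin d) ℝ),
      (⋃ i, D i) = {A : Matrix (Fin d) (Fin d) ℝ | A.IsSymm} →
      ∃ i, ∃ A ∈ D i,
        ¬ MVContinuousAt
            (fun A : Matrix (Fin d) (Fin d) ℝ =>
              {w : Fin d → (Fin d → ℝ) |
                LinearIndependent ℝ w ∧ Submodule.span ℝ (Set.range w) = ⊤ ∧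
                ∀ j, w j ≠ 0 ∧ ∃ l : ℝ, A.mulVec (w j) = l • w j})
            (D i) A := by
  intro D hcover
  by_contra hcon
  push_neg at hcon
  set F : Matrix (Fin d) (Fin d) ℝ → Set (Fin d → (Fin d → ℝ)) :=
    fun A : Matrix (Fin d) (Fin d) ℝ =>
      {w : Fin d → (Fin d → ℝ) |
        LinearIndependent ℝ w ∧ Submodule.span ℝ (Set.range w) = ⊤ ∧
        ∀ j, w j ≠ 0 ∧ ∃ l : ℝ, A.mulVec (w j) = l • w j} with hF
  have hFmem : ∀ (A : Matrix (Fin d) (Fin d) ℝ) (w : Fin d → (Fin d → ℝ)),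
      w ∈ F A → (Submodule.span ℝ (Set.range w) = ⊤ ∧
        ∀ j, w j ≠ 0 ∧ ∃ l : ℝ, A.mulVec (w j) = l • w j) := by
    intro A w hw
    exact ⟨hw.2.1, hw.2.2⟩
  have key : ∀ m : ℕ, m ≤ d - 1 →
      ∃ (T : Finset (Fin (d - 1))) (v : Fin m → (Fin d → ℝ)) (τ : Fin m → ℝ)
        (O : Set (Matrix (Fin d) (Fin d) ℝ)),
        T.card = m ∧ (∀ l l', v l ⬝ᵥ v l' = if l = l' then 1 else 0) ∧
        (∀ l, 0 < τ l) ∧ Function.Injective τ ∧ IsOpen O ∧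
        (∑ l, τ l • Matrix.vecMulVec (v l) (v l)) ∈ O ∧
        ∀ z ∈ O, ∀ i ∈ T, z ∈ D i →
          ∃ w ∈ F z, ∃ l : Fin m, ∀ (j : Fin d) (c : ℝ), w j ≠ c • v l := by
    intro m
    induction m with
    | zero =>
      intro _
      refine ⟨∅, Fin.elim0, Fin.elim0, Set.univ, Finset.card_empty, ?_, ?_, ?_,
        isOpen_univ, Set.mem_univ _, ?_⟩
      · intro l; exact l.elim0
      · intro l; exact l.elim0
      · intro l; exact l.elim0
      · intro z _ i hi
        exact absurd hi (Finset.notMem_empty i)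
    | succ m ih =>
      intro hm1
      obtain ⟨T, v, τ, O, hTcard, hv, hτpos, hτinj, hOopen, hAO, hInv⟩ :=
        ih (by omega)
      set A : Matrix (Fin d) (Fin d) ℝ := ∑ l, τ l • Matrix.vecMulVec (v l) (v l)
        with hAdef
      have hAsymm : A.IsSymm := my_A_symm v τ
      have hAcov : A ∈ ⋃ i, D i := by rw [hcover]; exact hAsymm
      obtain ⟨i₀, hAi₀⟩ := Set.mem_iUnion.mp hAcov
      -- i₀ is a fresh index
      have hi₀T : i₀ ∉ T := by
        intro hmem
        obtain ⟨w, hwF, l, hl⟩ := hInv A hAO i₀ hmem hAi₀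
        obtain ⟨hspan, heig⟩ := hFmem A w hwF
        obtain ⟨j, c, _, hjc⟩ :=
          my_eig v hv τ hτpos hτinj w hspan (fun j => (heig j).2) l
        exact hl j c hjc
      -- continuity at A relative to D i₀
      obtain ⟨y, hyF, hy⟩ := hcon i₀ A hAi₀
      have hynz : ∀ j, y j ≠ 0 := fun j => ((hFmem A y hyF).2 j).1
      -- pick a fresh orthonormal direction avoiding the lines of y
      obtain ⟨u, hu1, huv, huy⟩ := my_pick_vec (by omega) v y hynz
      -- distances to the line spanned by u
      set δ : Fin d → ℝ := fun j =>
        Metric.infDist (y j) ((Submodule.span ℝ {u} : Submodule ℝ (Fin d → ℝ)) : Set _)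
        with hδ
      have hδpos : ∀ j, 0 < δ j := by
        intro j
        have hclosed : IsClosed
            ((Submodule.span ℝ {u} : Submodule ℝ (Fin d → ℝ)) : Set (Fin d → ℝ)) :=
          Submodule.closed_of_finiteDimensional _
        exact (hclosed.notMem_iff_infDist_pos
          ⟨0, Submodule.zero_mem _⟩).mp (huy j)
      have : Nonempty (Fin d) := ⟨⟨0, by omega⟩⟩
      set ε : ℝ := (Finset.univ.inf' Finset.univ_nonempty δ) / 2 with hε
      have hεpos : 0 < ε := by
        have := Finset.lt_inf'_iff (Finset.univ_nonempty (α := Fin d)) (f := δ) (a := 0)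
        rw [hε]
        have h2 : 0 < Finset.univ.inf' Finset.univ_nonempty δ :=
          (Finset.lt_inf'_iff _).mpr fun j _ => hδpos j
        linarith
      have hεδ : ∀ j, 2 * ε ≤ δ j := by
        intro j
        have := Finset.inf'_le δ (Finset.mem_univ j)
        rw [hε]; linarith
      set V : Set (Fin d → (Fin d → ℝ)) := Metric.ball y ε with hV
      obtain ⟨U, hUopen, hAU, hU⟩ :=
        hy V Metric.isOpen_ball (Metric.mem_ball_self hεpos)
      -- anything in V has no coordinate on the line of u
      have hVavoid : ∀ w' ∈ V, ∀ (j : Fin d) (c : ℝ), w' j ≠ c • u := by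
        intro w' hw' j c heq
        have h1 : dist (w' j) (y j) ≤ dist w' y := dist_le_pi_dist w' y j
        have h2 : dist w' y < ε := Metric.mem_ball.mp hw'
        have h3 : δ j ≤ dist (y j) (w' j) := by
          apply Metric.infDist_le_dist_of_mem
          rw [heq]
          exact Submodule.smul_mem _ c (Submodule.mem_span_singleton_self u)
        rw [dist_comm] at h3
        have := hεδ j
        linarith
      -- choose the new eigenvalue small enough
      obtain ⟨t, ht0, htτ, htmem⟩ : ∃ t : ℝ, 0 < t ∧ (∀ l, t < τ l) ∧
          A + t • Matrix.vecMulVec u u ∈ O ∩ U := by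
        have hopen : IsOpen (O ∩ U) := hOopen.inter hUopen
        have hcont : Continuous fun t : ℝ => A + t • Matrix.vecMulVec u u := by
          exact continuous_const.add (continuous_id.smul continuous_const)
        have h0 : (0 : ℝ) ∈ (fun t : ℝ => A + t • Matrix.vecMulVec u u) ⁻¹' (O ∩ U) := by
          simp only [Set.mem_preimage, zero_smul, add_zero]
          exact ⟨hAO, hAU⟩
        obtain ⟨r, hr, hball⟩ := Metric.isOpen_iff.mp (hopen.preimage hcont) 0 h0
        obtain ⟨r2, hr2, hr2lt⟩ : ∃ r2 > 0, ∀ l : Fin m, r2 < τ l := by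
          rcases Nat.eq_zero_or_pos m with h | h
          · subst h
            exact ⟨1, one_pos, fun l => l.elim0⟩
          · have : Nonempty (Fin m) := ⟨⟨0, h⟩⟩
            refine ⟨(Finset.univ.inf' Finset.univ_nonempty τ) / 2, ?_, ?_⟩
            · have h2 : 0 < Finset.univ.inf' Finset.univ_nonempty τ :=
                (Finset.lt_inf'_iff _).mpr fun l _ => hτpos l
              linarith
            · intro l
              have := Finset.inf'_le τ (Finset.mem_univ l)
              have h2 : 0 < Finset.univ.inf' Finset.univ_nonempty τ :=
                (Finset.lt_inf'_iff _).mpr fun l' _ => hτpos l'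
              linarith
        refine ⟨min (r / 2) r2, by positivity, ?_, ?_⟩
        · intro l
          exact lt_of_le_of_lt (min_le_right _ _) (hr2lt l)
        · apply hball
          rw [Metric.mem_ball, Real.dist_eq, sub_zero]
          rw [abs_of_pos (by positivity)]
          have : min (r / 2) r2 ≤ r / 2 := min_le_left _ _
          linarith
      -- assemble the new data
      refine ⟨insert i₀ T, Fin.snoc v u, Fin.snoc τ t, O ∩ U, ?_, ?_, ?_, ?_,
        hOopen.inter hUopen, ?_, ?_⟩
      · rw [Finset.card_insert_of_notMem hi₀T, hTcard]
      · intro l l'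
        refine Fin.lastCases ?_ ?_ l <;> [skip; intro l1] <;>
          refine Fin.lastCases ?_ ?_ l' <;> try intro l2
        · simp [Fin.snoc_last, hu1]
        · rw [Fin.snoc_last, Fin.snoc_castSucc, dotProduct_comm, huv l2,
            if_neg (by exact (Fin.castSucc_lt_last l2).ne')]
        · rw [Fin.snoc_last, Fin.snoc_castSucc, huv l1,
            if_neg (by exact (Fin.castSucc_lt_last l1).ne)]
        · rw [Fin.snoc_castSucc, Fin.snoc_castSucc, hv l1 l2]
          simp [Fin.castSucc_inj]
      · intro l
        refine Fin.lastCases ?_ ?_ l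
        · rw [Fin.snoc_last]; exact ht0
        · intro l1; rw [Fin.snoc_castSucc]; exact hτpos l1
      · intro a b
        refine Fin.lastCases ?_ (fun a1 => ?_) a <;>
          refine Fin.lastCases ?_ (fun b1 => ?_) b <;> intro hab
        · rfl
        · rw [Fin.snoc_last, Fin.snoc_castSucc] at hab
          exact absurd hab (ne_of_lt (htτ b1))
        · rw [Fin.snoc_castSucc, Fin.snoc_last] at hab
          exact absurd hab (ne_of_gt (htτ a1))
        · rw [Fin.snoc_castSucc, Fin.snoc_castSucc] at hab
          rw [hτinj hab]
      · have hsum : (∑ l : Fin (m + 1),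
            (Fin.snoc τ t : Fin (m + 1) → ℝ) l •
              Matrix.vecMulVec ((Fin.snoc v u : Fin (m + 1) → (Fin d → ℝ)) l)
                ((Fin.snoc v u : Fin (m + 1) → (Fin d → ℝ)) l))
            = A + t • Matrix.vecMulVec u u := by
          rw [Fin.sum_univ_castSucc]
          simp only [Fin.snoc_castSucc, Fin.snoc_last]
          rfl
        rw [hsum]
        exact htmem
      · intro z hz i hi hzDi
        rcases Finset.mem_insert.mp hi with rfl | hiT
        · obtain ⟨w, hwF, hwV⟩ := hU z ⟨hz.2, hzDi⟩
          refine ⟨w, hwF, Fin.last m, ?_⟩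
          intro j c
          have := hVavoid w hwV j c
          rw [Fin.snoc_last]
          exact this
        · obtain ⟨w, hwF, l, hl⟩ := hInv z hz.1 i hiT hzDi
          refine ⟨w, hwF, Fin.castSucc l, ?_⟩
          intro j c
          rw [Fin.snoc_castSucc]
          exact hl j c
  -- final contradiction
  obtain ⟨T, v, τ, O, hTcard, hv, hτpos, hτinj, hOopen, hAO, hInv⟩ :=
    key (d - 1) le_rfl
  have hTuniv : T = Finset.univ :=
    Finset.eq_univ_of_card T (by rw [hTcard, Fintype.card_fin])
  set A : Matrix (Fin d) (Fin d) ℝ := ∑ l, τ l • Matrix.vecMulVec (v l) (v l)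
    with hAdef
  have hAcov : A ∈ ⋃ i, D i := by rw [hcover]; exact my_A_symm v τ
  obtain ⟨i₀, hAi₀⟩ := Set.mem_iUnion.mp hAcov
  obtain ⟨w, hwF, l, hl⟩ := hInv A hAO i₀ (hTuniv ▸ Finset.mem_univ i₀) hAi₀
  obtain ⟨hspan, heig⟩ := hFmem A w hwF
  obtain ⟨j, c, _, hjc⟩ :=
    my_eig v hv τ hτpos hτinj w hspan (fun j => (heig j).2) l
  exact hl j c hjc
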